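/- For every real p with 2 ≤ p < ∞ and every t with 0 < t ≤ 1, one has ( ((1 + t)^p + (1 − t)^p)/2 )^{1/p} − 1 < ((p − 1)/2)·t². -/

import Mathlib

open Real Set

private lemma pow_half_aux {r : ℝ} (hr : 0 < r) (a : ℝ) (ha : 0 ≤ a) :
    (a * a) ^ (r / 2) = a ^ r := by
  rcases ha.eq_or_lt with h | h
  · rw [← h]
    rw [mul_zero, Real.zero_rpow (by positivity : r / 2 ≠ 0), Real.zero_rpow hr.ne']
  · rw [Real.mul_rpow ha ha, ← Real.rpow_add h]
    norm_num

/-- Base case: the sum inequality for `0 ≤ r ≤ 2`. -/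
private lemma sum_base {r : ℝ} (h0 : 0 ≤ r) (h2 : r ≤ 2) :
    ∀ s : ℝ, 0 ≤ s → s ≤ 1 →
      (1 + s) ^ r + (1 - s) ^ r ≤ 2 * (1 + r / 2 * s ^ 2) ^ r := by
  intro s hs0 hs1
  have hM1 : (1 : ℝ) ≤ 1 + r / 2 * s ^ 2 := by nlinarith [sq_nonneg s]
  have hMr : (1 : ℝ) ≤ (1 + r / 2 * s ^ 2) ^ r := by
    calc (1 : ℝ) = 1 ^ r := (Real.one_rpow r).symm
    _ ≤ (1 + r / 2 * s ^ 2) ^ r := Real.rpow_le_rpow zero_le_one hM1 h0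
  rcases le_total r 1 with hr1 | hr1
  · have b1 : (1 + s) ^ r ≤ 1 + r * s :=
      rpow_one_add_le_one_add_mul_self (by linarith) h0 hr1
    have b2 : (1 - s) ^ r ≤ 1 + r * (-s) := by
      have := rpow_one_add_le_one_add_mul_self (s := -s) (by linarith) h0 hr1
      simpa [sub_eq_add_neg] using this
    nlinarith
  · -- 1 ≤ r ≤ 2
    have hrpos : 0 < r := by linarith
    have hs2 : (0 : ℝ) < 1 + s ^ 2 := by positivity
    set z : ℝ := 2 * s / (1 + s ^ 2) with hz
    have hz0 : 0 ≤ z := by positivity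
    have hz1 : z ≤ 1 := by
      rw [hz, div_le_one hs2]; nlinarith [sq_nonneg (1 - s)]
    have sq1 : (1 + s) * (1 + s) = (1 + s ^ 2) * (1 + z) := by
      rw [hz]; field_simp; ring
    have sq2 : (1 - s) * (1 - s) = (1 + s ^ 2) * (1 - z) := by
      rw [hz]; field_simp; ring
    have hb1 : (1 + z) ^ (r / 2) ≤ 1 + r / 2 * z :=
      rpow_one_add_le_one_add_mul_self (by linarith) (by positivity) (by linarith)
    have hb2 : (1 - z) ^ (r / 2) ≤ 1 + r / 2 * (-z) := by
      have := rpow_one_add_le_one_add_mul_self (s := -z) (by linarith) (by positivity)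
        (by linarith : r / 2 ≤ 1)
      simpa [sub_eq_add_neg] using this
    have hP : (0 : ℝ) ≤ (1 + s ^ 2) ^ (r / 2) := Real.rpow_nonneg hs2.le _
    have key : (1 + s) ^ r + (1 - s) ^ r ≤ 2 * (1 + s ^ 2) ^ (r / 2) := by
      calc (1 + s) ^ r + (1 - s) ^ r
          = ((1 + s) * (1 + s)) ^ (r / 2) + ((1 - s) * (1 - s)) ^ (r / 2) := by
            rw [pow_half_aux hrpos _ (by linarith), pow_half_aux hrpos _ (by linarith)]
      _ = (1 + s ^ 2) ^ (r / 2) * (1 + z) ^ (r / 2)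
            + (1 + s ^ 2) ^ (r / 2) * (1 - z) ^ (r / 2) := by
            rw [sq1, sq2, Real.mul_rpow hs2.le (by linarith),
              Real.mul_rpow hs2.le (by linarith)]
      _ ≤ (1 + s ^ 2) ^ (r / 2) * (1 + r / 2 * z)
            + (1 + s ^ 2) ^ (r / 2) * (1 + r / 2 * (-z)) := by
            gcongr
      _ = 2 * (1 + s ^ 2) ^ (r / 2) := by ring
    have last : (1 + s ^ 2) ^ (r / 2) ≤ (1 + r / 2 * s ^ 2) ^ r := by
      have h6 : (1 + s ^ 2) ≤ (1 + r / 2 * s ^ 2) * (1 + r / 2 * s ^ 2) := by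
        nlinarith [sq_nonneg s, sq_nonneg (s ^ 2)]
      calc (1 + s ^ 2) ^ (r / 2)
          ≤ ((1 + r / 2 * s ^ 2) * (1 + r / 2 * s ^ 2)) ^ (r / 2) :=
            Real.rpow_le_rpow hs2.le h6 (by positivity)
      _ = (1 + r / 2 * s ^ 2) ^ r := pow_half_aux hrpos _ (by linarith)
    linarith

private lemma hasDerivAt_onePlus (a x : ℝ) (hx : -1 < x) :
    HasDerivAt (fun s : ℝ => (1 + s) ^ a) (a * (1 + x) ^ (a - 1)) x := by
  have h1 : HasDerivAt (fun s : ℝ => 1 + s) 1 x := (hasDerivAt_id x).const_add 1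
  have := h1.rpow_const (p := a) (Or.inl (by linarith : (1 : ℝ) + x ≠ 0))
  simpa using this

private lemma hasDerivAt_oneMinus (a x : ℝ) (hx : x < 1) :
    HasDerivAt (fun s : ℝ => (1 - s) ^ a) (-(a * (1 - x) ^ (a - 1))) x := by
  have h1 : HasDerivAt (fun s : ℝ => 1 - s) (-1) x := (hasDerivAt_id x).const_sub 1
  have := h1.rpow_const (p := a) (Or.inl (by linarith : (1 : ℝ) - x ≠ 0))
  have h2 : (-1 : ℝ) * a * (1 - x) ^ (a - 1) = -(a * (1 - x) ^ (a - 1)) := by ring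
  rw [h2] at this
  exact this

private lemma hasDerivAt_M (c a x : ℝ) (hc : 0 ≤ c) :
    HasDerivAt (fun s : ℝ => (1 + c * s ^ 2) ^ a)
      (c * (2 * x) * a * (1 + c * x ^ 2) ^ (a - 1)) x := by
  have hM : (0 : ℝ) < 1 + c * x ^ 2 := by nlinarith [sq_nonneg x]
  have h1 : HasDerivAt (fun s : ℝ => 1 + c * s ^ 2) (c * (2 * x)) x := by
    have := ((hasDerivAt_pow 2 x).const_mul c).const_add 1
    simpa using this
  exact h1.rpow_const (Or.inl hM.ne')

private lemma contOn_aux (a : ℝ) (ha : 0 ≤ a) {c : ℝ} (hc : 0 ≤ c) :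
    ContinuousOn (fun s : ℝ => (1 + s) ^ a) (Icc 0 1) ∧
    ContinuousOn (fun s : ℝ => (1 - s) ^ a) (Icc 0 1) ∧
    ContinuousOn (fun s : ℝ => (1 + c * s ^ 2) ^ a) (Icc 0 1) := by
  refine ⟨?_, ?_, ?_⟩
  · exact (continuous_const.add continuous_id).continuousOn.rpow_const fun x _ => Or.inr ha
  · exact (continuous_const.sub continuous_id).continuousOn.rpow_const fun x _ => Or.inr ha
  · exact (continuous_const.add (continuous_const.mul (continuous_pow 2))).continuousOn.rpow_const
      fun x _ => Or.inr ha

/-- The difference inequality, assuming the sum inequality one level down. -/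
private lemma diff_lt {q : ℝ} (hq : 1 ≤ q)
    (hS : ∀ s : ℝ, 0 ≤ s → s ≤ 1 →
      (1 + s) ^ (q - 1) + (1 - s) ^ (q - 1) ≤ 2 * (1 + (q - 1) / 2 * s ^ 2) ^ (q - 1)) :
    ∀ s : ℝ, 0 < s → s ≤ 1 →
      (1 + s) ^ q - (1 - s) ^ q < 2 * q * s * (1 + q / 2 * s ^ 2) ^ q := by
  have hq0 : (0 : ℝ) ≤ q / 2 := by linarith
  set K : ℝ → ℝ := fun s =>
    2 * q * s * (1 + q / 2 * s ^ 2) ^ q - (1 + s) ^ q + (1 - s) ^ q with hKdef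
  obtain ⟨c1, c2, c3⟩ := contOn_aux q (by linarith) hq0
  have hcont : ContinuousOn K (Icc 0 1) := by
    exact (((continuous_const.mul continuous_id).continuousOn.mul c3).sub c1).add c2
  have hderiv : ∀ x ∈ Ioo (0 : ℝ) 1, HasDerivAt K
      ((2 * q * (1 + q / 2 * x ^ 2) ^ q
        + 2 * q * x * (q / 2 * (2 * x) * q * (1 + q / 2 * x ^ 2) ^ (q - 1)))
        - q * (1 + x) ^ (q - 1) + -(q * (1 - x) ^ (q - 1))) x := by
    intro x hx
    have h1 : HasDerivAt (fun s : ℝ => 2 * q * s) (2 * q) x := by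
      simpa using (hasDerivAt_id x).const_mul (2 * q)
    have h2 := hasDerivAt_M (q / 2) q x hq0
    have h3 := (h1.mul h2)
    have h4 := hasDerivAt_onePlus q x (by linarith [hx.1])
    have h5 := hasDerivAt_oneMinus q x hx.2
    have := (h3.sub h4).add h5
    convert this using 1
    try ring
    all_goals rfl
  have hpos : ∀ x ∈ Ioo (0 : ℝ) 1,
      0 < (2 * q * (1 + q / 2 * x ^ 2) ^ q
        + 2 * q * x * (q / 2 * (2 * x) * q * (1 + q / 2 * x ^ 2) ^ (q - 1)))
        - q * (1 + x) ^ (q - 1) + -(q * (1 - x) ^ (q - 1)) := by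
    intro x hx
    obtain ⟨hx0, hx1⟩ := hx
    have hM : (0 : ℝ) < 1 + q / 2 * x ^ 2 := by nlinarith
    have hA : (0 : ℝ) < (1 + q / 2 * x ^ 2) ^ (q - 1) := Real.rpow_pos_of_pos hM _
    have hMq : (1 + q / 2 * x ^ 2) ^ q = (1 + q / 2 * x ^ 2) ^ (q - 1) * (1 + q / 2 * x ^ 2) := by
      rw [← Real.rpow_add_one hM.ne' (q - 1), sub_add_cancel]
    have hB : (1 + x) ^ (q - 1) + (1 - x) ^ (q - 1)
        ≤ 2 * (1 + q / 2 * x ^ 2) ^ (q - 1) := by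
      refine (hS x hx0.le hx1.le).trans ?_
      have : (1 + (q - 1) / 2 * x ^ 2) ≤ 1 + q / 2 * x ^ 2 := by nlinarith
      have := Real.rpow_le_rpow (by nlinarith : (0:ℝ) ≤ 1 + (q - 1) / 2 * x ^ 2) this
        (by linarith : (0:ℝ) ≤ q - 1)
      linarith
    rw [hMq]
    have hqpos : (0:ℝ) < q := by linarith
    have h1 : (0:ℝ) < q * (q * (x ^ 2 * (1 + q / 2 * x ^ 2) ^ (q - 1))) := by positivity
    have h2 : (0:ℝ) < q * (q * (q * (x ^ 2 * (1 + q / 2 * x ^ 2) ^ (q - 1)))) := by positivity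
    nlinarith [h1, h2, mul_le_mul_of_nonneg_left hB (by linarith : (0:ℝ) ≤ q)]
  have hmono : StrictMonoOn K (Icc 0 1) := by
    apply strictMonoOn_of_hasDerivWithinAt_pos (convex_Icc 0 1) hcont
      (f' := fun x => (2 * q * (1 + q / 2 * x ^ 2) ^ q
        + 2 * q * x * (q / 2 * (2 * x) * q * (1 + q / 2 * x ^ 2) ^ (q - 1)))
        - q * (1 + x) ^ (q - 1) + -(q * (1 - x) ^ (q - 1)))
    · intro x hx
      rw [interior_Icc] at hx
      exact (hderiv x hx).hasDerivWithinAt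
    · intro x hx
      rw [interior_Icc] at hx
      exact hpos x hx
  intro s hs0 hs1
  have hK0 : K 0 = 0 := by
    simp [hKdef, Real.one_rpow]; try norm_num
  have := hmono (left_mem_Icc.mpr zero_le_one) ⟨hs0.le, hs1⟩ hs0
  rw [hK0] at this
  simp only [hKdef] at this
  linarith

/-- The sum inequality for `r ≥ 2`, assuming the difference inequality one level down. -/
private lemma sum_step {r : ℝ} (hr : 2 ≤ r)
    (hD : ∀ s : ℝ, 0 < s → s ≤ 1 →
      (1 + s) ^ (r - 1) - (1 - s) ^ (r - 1)
        < 2 * (r - 1) * s * (1 + (r - 1) / 2 * s ^ 2) ^ (r - 1)) :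
    ∀ s : ℝ, 0 ≤ s → s ≤ 1 →
      (1 + s) ^ r + (1 - s) ^ r ≤ 2 * (1 + r / 2 * s ^ 2) ^ r := by
  have hr0 : (0 : ℝ) ≤ r / 2 := by linarith
  set H : ℝ → ℝ := fun s =>
    2 * (1 + r / 2 * s ^ 2) ^ r - (1 + s) ^ r - (1 - s) ^ r with hHdef
  obtain ⟨c1, c2, c3⟩ := contOn_aux r (by linarith) hr0
  have hcont : ContinuousOn H (Icc 0 1) := by
    exact ((c3.const_smul (2:ℝ)).sub c1).sub c2
  have hderiv : ∀ x ∈ Ioo (0 : ℝ) 1, HasDerivAt H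
      (2 * (r / 2 * (2 * x) * r * (1 + r / 2 * x ^ 2) ^ (r - 1))
        - r * (1 + x) ^ (r - 1) - -(r * (1 - x) ^ (r - 1))) x := by
    intro x hx
    have h2 := (hasDerivAt_M (r / 2) r x hr0).const_mul 2
    have h4 := hasDerivAt_onePlus r x (by linarith [hx.1])
    have h5 := hasDerivAt_oneMinus r x hx.2
    have := (h2.sub h4).sub h5
    convert this using 1
    try ring
    all_goals rfl
  have hpos : ∀ x ∈ Ioo (0 : ℝ) 1,
      0 < 2 * (r / 2 * (2 * x) * r * (1 + r / 2 * x ^ 2) ^ (r - 1))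
        - r * (1 + x) ^ (r - 1) - -(r * (1 - x) ^ (r - 1)) := by
    intro x hx
    obtain ⟨hx0, hx1⟩ := hx
    have hM : (0 : ℝ) < 1 + r / 2 * x ^ 2 := by nlinarith
    have hA : (0 : ℝ) < (1 + r / 2 * x ^ 2) ^ (r - 1) := Real.rpow_pos_of_pos hM _
    have hB : (1 + x) ^ (r - 1) - (1 - x) ^ (r - 1)
        < 2 * (r - 1) * x * (1 + r / 2 * x ^ 2) ^ (r - 1) := by
      refine (hD x hx0 hx1.le).trans_le ?_
      have h1 : (1 + (r - 1) / 2 * x ^ 2) ≤ 1 + r / 2 * x ^ 2 := by nlinarith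
      have h2 := Real.rpow_le_rpow (by nlinarith : (0:ℝ) ≤ 1 + (r - 1) / 2 * x ^ 2) h1
        (by linarith : (0:ℝ) ≤ r - 1)
      have h3 : (0:ℝ) ≤ 2 * (r - 1) * x := by nlinarith
      exact mul_le_mul_of_nonneg_left h2 h3
    nlinarith [mul_pos hA hx0]
  have hmono : StrictMonoOn H (Icc 0 1) := by
    apply strictMonoOn_of_hasDerivWithinAt_pos (convex_Icc 0 1) hcont
      (f' := fun x => 2 * (r / 2 * (2 * x) * r * (1 + r / 2 * x ^ 2) ^ (r - 1))
        - r * (1 + x) ^ (r - 1) - -(r * (1 - x) ^ (r - 1)))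
    · intro x hx
      rw [interior_Icc] at hx
      exact (hderiv x hx).hasDerivWithinAt
    · intro x hx
      rw [interior_Icc] at hx
      exact hpos x hx
  intro s hs0 hs1
  rcases hs0.eq_or_lt with h | h
  · rw [← h]
    norm_num [Real.one_rpow]
  · have hH0 : H 0 = 0 := by
      simp [hHdef, Real.one_rpow]; norm_num
    have := hmono (left_mem_Icc.mpr zero_le_one) ⟨hs0, hs1⟩ h
    rw [hH0] at this
    simp only [hHdef] at this
    linarith

/-- The sum inequality for all `r ≥ 0`, by induction. -/
private lemma sum_all : ∀ (n : ℕ) (r : ℝ), 0 ≤ r → r ≤ n + 2 →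
    ∀ s : ℝ, 0 ≤ s → s ≤ 1 →
      (1 + s) ^ r + (1 - s) ^ r ≤ 2 * (1 + r / 2 * s ^ 2) ^ r := by
  intro n
  induction n with
  | zero =>
    intro r h0 h2
    exact sum_base h0 (by norm_num at h2; linarith)
  | succ n ih =>
    intro r h0 h2
    rcases le_total r 2 with h | h
    · exact sum_base h0 h
    · refine sum_step h (fun s hs0 hs1 => ?_)
      refine diff_lt (by linarith : (1:ℝ) ≤ r - 1) (fun u hu0 hu1 => ?_) s hs0 hs1
      have e : r - 1 - 1 = r - 2 := by ring
      rw [e]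
      have h2' : r - 2 ≤ n + 2 := by
        push_cast at h2 ⊢
        linarith
      exact ih (r - 2) (by linarith) h2' u hu0 hu1

private lemma diff_lt_final {q : ℝ} (hq : 1 ≤ q) :
    ∀ s : ℝ, 0 < s → s ≤ 1 →
      (1 + s) ^ q - (1 - s) ^ q < 2 * q * s * (1 + q / 2 * s ^ 2) ^ q := by
  refine diff_lt hq (fun s hs0 hs1 => ?_)
  refine sum_all ⌈q⌉₊ (q - 1) (by linarith) ?_ s hs0 hs1
  have := Nat.le_ceil q
  push_cast
  linarith

/-- For `2 ≤ p < ∞` and `0 < t ≤ 1`, the modulus of smoothness of `L_p`,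
`(((1+t)^p + (1−t)^p)/2)^{1/p} − 1`, is strictly less than `((p−1)/2) t²`. -/
theorem modSmooth_Lp_lt_of_two_le (p t : ℝ) (hp : 2 ≤ p) (ht0 : 0 < t) (ht1 : t ≤ 1) :
    (((1 + t) ^ p + (1 - t) ^ p) / 2) ^ (1 / p) - 1 < (p - 1) / 2 * t ^ 2 := by
  have hq : (1 : ℝ) ≤ p - 1 := by linarith
  have hp0 : (0 : ℝ) < p := by linarith
  have hc0 : (0 : ℝ) ≤ (p - 1) / 2 := by linarith
  -- main strict inequality via monotonicity of F
  set F : ℝ → ℝ := fun s =>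
    2 * (1 + (p - 1) / 2 * s ^ 2) ^ p - (1 + s) ^ p - (1 - s) ^ p with hFdef
  obtain ⟨c1, c2, c3⟩ := contOn_aux p (by linarith) hc0
  have hcont : ContinuousOn F (Icc 0 1) := by
    exact ((c3.const_smul (2:ℝ)).sub c1).sub c2
  have hderiv : ∀ x ∈ Ioo (0 : ℝ) 1, HasDerivAt F
      (2 * ((p - 1) / 2 * (2 * x) * p * (1 + (p - 1) / 2 * x ^ 2) ^ (p - 1))
        - p * (1 + x) ^ (p - 1) - -(p * (1 - x) ^ (p - 1))) x := by
    intro x hx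
    have h2 := (hasDerivAt_M ((p - 1) / 2) p x hc0).const_mul 2
    have h4 := hasDerivAt_onePlus p x (by linarith [hx.1])
    have h5 := hasDerivAt_oneMinus p x hx.2
    have := (h2.sub h4).sub h5
    convert this using 1
    try ring
    all_goals rfl
  have hpos : ∀ x ∈ Ioo (0 : ℝ) 1,
      0 < 2 * ((p - 1) / 2 * (2 * x) * p * (1 + (p - 1) / 2 * x ^ 2) ^ (p - 1))
        - p * (1 + x) ^ (p - 1) - -(p * (1 - x) ^ (p - 1)) := by
    intro x hx
    obtain ⟨hx0, hx1⟩ := hx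
    have hB := diff_lt_final hq x hx0 hx1.le
    nlinarith
  have hmono : StrictMonoOn F (Icc 0 1) := by
    apply strictMonoOn_of_hasDerivWithinAt_pos (convex_Icc 0 1) hcont
      (f' := fun x => 2 * ((p - 1) / 2 * (2 * x) * p * (1 + (p - 1) / 2 * x ^ 2) ^ (p - 1))
        - p * (1 + x) ^ (p - 1) - -(p * (1 - x) ^ (p - 1)))
    · intro x hx
      rw [interior_Icc] at hx
      exact (hderiv x hx).hasDerivWithinAt
    · intro x hx
      rw [interior_Icc] at hx
      exact hpos x hx
  have hF0 : F 0 = 0 := by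
    simp [hFdef, Real.one_rpow]; norm_num
  have hFt : 0 < F t := by
    have := hmono (left_mem_Icc.mpr zero_le_one) ⟨ht0.le, ht1⟩ ht0
    rwa [hF0] at this
  simp only [hFdef] at hFt
  have hlt : ((1 + t) ^ p + (1 - t) ^ p) / 2 < (1 + (p - 1) / 2 * t ^ 2) ^ p := by
    linarith
  have hL0 : (0 : ℝ) ≤ ((1 + t) ^ p + (1 - t) ^ p) / 2 := by
    have := Real.rpow_nonneg (by linarith : (0:ℝ) ≤ 1 + t) p
    have := Real.rpow_nonneg (by linarith : (0:ℝ) ≤ 1 - t) p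
    linarith
  have hfin := Real.rpow_lt_rpow hL0 hlt (by positivity : (0:ℝ) < 1 / p)
  have hMpos : (0 : ℝ) ≤ 1 + (p - 1) / 2 * t ^ 2 := by nlinarith
  have heq : ((1 + (p - 1) / 2 * t ^ 2) ^ p) ^ (1 / p) = 1 + (p - 1) / 2 * t ^ 2 := by
    rw [← Real.rpow_mul hMpos, mul_one_div, div_self hp0.ne', Real.rpow_one]
  rw [heq] at hfin
  linarith
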